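/- Let Ω be a finite state space containing four distinct states ω_1, ω_2, ω_3, ω_4, and let X: Ω → ℝ satisfy X(ω_1) = a, X(ω_2) = d, X(ω_3) = b, X(ω_4) = d where (d − a)(d − b) > 0 (so either a, b < d or a, b > d). Define Π_1 as the partition of Ω with cells {ω_1, ω_2}, {ω_3, ω_4} and singletons for all other states, and Π_2 as the partition with cells {ω_1, ω_4}, {ω_2, ω_3} and singletons elsewhere. Fix m ∈ (0, 1/2) and p ∈ (0, 1 − 2m) satisfying a·p/(p + m) + d·m/(p + m) = b·(1 − p − 2m)/(1 − p − m) + d·m/(1 − p − m), and define the prior μ by μ(ω_1) = p, μ(ω_2) = m, μ(ω_3) = 1 − p − 2m, μ(ω_4) = m, and μ(ω) = 0 otherwise. Then E_μ[X | Π_i(ω)] = a·p/(p + m) + d·m/(p + m) for i = 1, 2 and every ω ∈ supp μ, and X is non-separable at μ under Π = (Π_1, Π_2) with value v = a·p/(p + m) + d·m/(p + m). -/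

import Mathlib

noncomputable section
open scoped Classical
open Finset

/-- A partition of `Ω` given by its cell map: `C ω` is the cell containing `ω`. -/
def IsPartitionFun {Ω : Type*} (C : Ω → Set Ω) : Prop :=
  (∀ ω, ω ∈ C ω) ∧ ∀ ω ω', ω' ∈ C ω → C ω' = C ω

/-- The fine-join property: the intersection of all traders' cells at `ω` is `{ω}`. -/
def FineJoin {Ω : Type*} {n : ℕ} (C : Fin n → Ω → Set Ω) : Prop :=
  ∀ ω ω', (∀ i, ω' ∈ C i ω) → ω' = ω

/-- A prior: a probability distribution on the finite state space. -/
def IsPrior {Ω : Type*} [Fintype Ω] (μ : Ω → ℝ) : Prop :=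
  (∀ ω, 0 ≤ μ ω) ∧ ∑ ω, μ ω = 1

/-- Support of a prior. -/
def suppSet {Ω : Type*} (μ : Ω → ℝ) : Set Ω := {ω | 0 < μ ω}

/-- Conditional expectation `E_μ[X | S]`. -/
def condExp {Ω : Type*} [Fintype Ω] (μ X : Ω → ℝ) (S : Set Ω) : ℝ :=
  (∑ ω, if ω ∈ S then μ ω * X ω else 0) / (∑ ω, if ω ∈ S then μ ω else 0)

/-- `X` is non-separable at prior `μ` with value `v` under the information structure `C`. -/
def NonSeparableAt {Ω : Type*} [Fintype Ω] {n : ℕ}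
    (C : Fin n → Ω → Set Ω) (X μ : Ω → ℝ) (v : ℝ) : Prop :=
  (∃ ω ∈ suppSet μ, X ω ≠ v) ∧
  ∀ (i : Fin n) (ω : Ω), ω ∈ suppSet μ → condExp μ X (C i ω) = v

/-- `X` is separable under the information structure `C`. -/
def SeparableSec {Ω : Type*} [Fintype Ω] {n : ℕ}
    (C : Fin n → Ω → Set Ω) (X : Ω → ℝ) : Prop :=
  ¬ ∃ (μ : Ω → ℝ) (v : ℝ), IsPrior μ ∧ NonSeparableAt C X μ v

/-- Arrow–Debreu security: pays `a` at one state, `b ≠ a` at all other states. -/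
def ArrowDebreu {Ω : Type*} (X : Ω → ℝ) : Prop :=
  ∃ (a b : ℝ) (ωs : Ω), a ≠ b ∧ X ωs = a ∧ ∀ ω, ω ≠ ωs → X ω = b

/-- Three-value form: pays `a < b < d` with `a` at one state, `d` at another, `b` elsewhere. -/
def ThreeValueForm {Ω : Type*} (X : Ω → ℝ) : Prop :=
  ∃ (a b d : ℝ) (ωa ωd : Ω), a < b ∧ b < d ∧ ωa ≠ ωd ∧
    X ωa = a ∧ X ωd = d ∧ ∀ ω, ω ≠ ωa → ω ≠ ωd → X ω = b


private lemma sum4 {Ω : Type*} [Fintype Ω] (f : Ω → ℝ) (ω1 ω2 ω3 ω4 : Ω)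
    (h12 : ω1 ≠ ω2) (h13 : ω1 ≠ ω3) (h14 : ω1 ≠ ω4)
    (h23 : ω2 ≠ ω3) (h24 : ω2 ≠ ω4) (h34 : ω3 ≠ ω4)
    (h0 : ∀ ω, ω ≠ ω1 → ω ≠ ω2 → ω ≠ ω3 → ω ≠ ω4 → f ω = 0) :
    ∑ ω, f ω = f ω1 + f ω2 + f ω3 + f ω4 := by
  have hsub : ({ω1, ω2, ω3, ω4} : Finset Ω) ⊆ Finset.univ := Finset.subset_univ _
  rw [← Finset.sum_subset hsub]
  · simp [Finset.sum_insert, h12, h13, h14, h23, h24, h34, add_assoc]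
  · intro x _ hx
    simp only [Finset.mem_insert, Finset.mem_singleton, not_or] at hx
    exact h0 x hx.1 hx.2.1 hx.2.2.1 hx.2.2.2

/-- with the `(a, d, b, d)` payoff structure and the equalizing
prior `(p, m, 1 - p - 2m, m)`, both traders' conditional expectations agree and
`X` is non-separable at the prior. -/
theorem nonseparable_adbd {Ω : Type*} [Fintype Ω] (X : Ω → ℝ)
    (ω1 ω2 ω3 ω4 : Ω)
    (h12 : ω1 ≠ ω2) (h13 : ω1 ≠ ω3) (h14 : ω1 ≠ ω4)
    (h23 : ω2 ≠ ω3) (h24 : ω2 ≠ ω4) (h34 : ω3 ≠ ω4)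
    (a b d : ℝ)
    (hX1 : X ω1 = a) (hX2 : X ω2 = d) (hX3 : X ω3 = b) (hX4 : X ω4 = d)
    (habd : (d - a) * (d - b) > 0)
    (C1 C2 : Ω → Set Ω)
    (hC1 : C1 = fun ω => if ω = ω1 ∨ ω = ω2 then ({ω1, ω2} : Set Ω)
                 else if ω = ω3 ∨ ω = ω4 then ({ω3, ω4} : Set Ω) else {ω})
    (hC2 : C2 = fun ω => if ω = ω1 ∨ ω = ω4 then ({ω1, ω4} : Set Ω)
                 else if ω = ω2 ∨ ω = ω3 then ({ω2, ω3} : Set Ω) else {ω})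
    (m p : ℝ) (hm0 : 0 < m) (hm1 : m < 1 / 2)
    (hp0 : 0 < p) (hp1 : p < 1 - 2 * m)
    (heq : a * p / (p + m) + d * m / (p + m)
            = b * (1 - p - 2 * m) / (1 - p - m) + d * m / (1 - p - m))
    (μ : Ω → ℝ)
    (hμ : μ = fun ω => if ω = ω1 then p else if ω = ω2 then m
                 else if ω = ω3 then 1 - p - 2 * m
                 else if ω = ω4 then m else 0) :
    (∀ (i : Fin 2) (ω : Ω), ω ∈ suppSet μ →
        condExp μ X (![C1, C2] i ω) = a * p / (p + m) + d * m / (p + m)) ∧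
    NonSeparableAt ![C1, C2] X μ (a * p / (p + m) + d * m / (p + m)) := by
  have h21 := h12.symm; have h31 := h13.symm; have h41 := h14.symm
  have h32 := h23.symm; have h42 := h24.symm; have h43 := h34.symm
  have hpm : (0:ℝ) < p + m := by linarith
  have hqm : (0:ℝ) < 1 - p - m := by linarith
  have hq : (0:ℝ) < 1 - p - 2 * m := by linarith
  have hz : ∀ (g : Ω → ℝ) (S : Set Ω), ∀ ω, ω ≠ ω1 → ω ≠ ω2 → ω ≠ ω3 → ω ≠ ω4 →
      (if ω ∈ S then μ ω * g ω else 0) = 0 := by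
    intro g S ω e1 e2 e3 e4
    simp [hμ, e1, e2, e3, e4]
  have hz' : ∀ (S : Set Ω), ∀ ω, ω ≠ ω1 → ω ≠ ω2 → ω ≠ ω3 → ω ≠ ω4 →
      (if ω ∈ S then μ ω else 0) = 0 := by
    intro S ω e1 e2 e3 e4
    simp [hμ, e1, e2, e3, e4]
  have key1 : condExp μ X ({ω1, ω2} : Set Ω) = a * p / (p + m) + d * m / (p + m) := by
    unfold condExp
    rw [sum4 _ ω1 ω2 ω3 ω4 h12 h13 h14 h23 h24 h34 (hz _ _),
        sum4 _ ω1 ω2 ω3 ω4 h12 h13 h14 h23 h24 h34 (hz' _)]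
    simp [h12, h13, h14, h23, h24, h34, h21, h31, h41, h32, h42, h43, hμ, hX1, hX2, hX3, hX4]
    field_simp
  have key3 : condExp μ X ({ω1, ω4} : Set Ω) = a * p / (p + m) + d * m / (p + m) := by
    unfold condExp
    rw [sum4 _ ω1 ω2 ω3 ω4 h12 h13 h14 h23 h24 h34 (hz _ _),
        sum4 _ ω1 ω2 ω3 ω4 h12 h13 h14 h23 h24 h34 (hz' _)]
    simp [h12, h13, h14, h23, h24, h34, h21, h31, h41, h32, h42, h43, hμ, hX1, hX2, hX3, hX4]
    field_simp
  have heq' : a * p / (p + m) + d * m / (p + m)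
      = b * (1 - p - 2 * m) / (1 - p - m) + d * m / (1 - p - m) := heq
  have key2 : condExp μ X ({ω3, ω4} : Set Ω) = a * p / (p + m) + d * m / (p + m) := by
    unfold condExp
    rw [sum4 _ ω1 ω2 ω3 ω4 h12 h13 h14 h23 h24 h34 (hz _ _),
        sum4 _ ω1 ω2 ω3 ω4 h12 h13 h14 h23 h24 h34 (hz' _)]
    rw [heq']
    simp [h12, h13, h14, h23, h24, h34, h21, h31, h41, h32, h42, h43, hμ, hX1, hX2, hX3, hX4]
    field_simp
    ring
  have key4 : condExp μ X ({ω2, ω3} : Set Ω) = a * p / (p + m) + d * m / (p + m) := by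
    unfold condExp
    rw [sum4 _ ω1 ω2 ω3 ω4 h12 h13 h14 h23 h24 h34 (hz _ _),
        sum4 _ ω1 ω2 ω3 ω4 h12 h13 h14 h23 h24 h34 (hz' _)]
    rw [heq']
    simp [h12, h13, h14, h23, h24, h34, h21, h31, h41, h32, h42, h43, hμ, hX1, hX2, hX3, hX4]
    rw [show m + (1 - p - 2 * m) = 1 - p - m by ring]
    ring
  have hcases : ∀ ω, ω ∈ suppSet μ → ω = ω1 ∨ ω = ω2 ∨ ω = ω3 ∨ ω = ω4 := by
    intro ω hω
    by_contra hc
    push_neg at hc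
    obtain ⟨e1, e2, e3, e4⟩ := hc
    have : μ ω = 0 := by simp [hμ, e1, e2, e3, e4]
    simp [suppSet, this] at hω
  have main : ∀ (i : Fin 2) (ω : Ω), ω ∈ suppSet μ →
      condExp μ X (![C1, C2] i ω) = a * p / (p + m) + d * m / (p + m) := by
    intro i ω hω
    have hi : ![C1, C2] i = C1 ∨ ![C1, C2] i = C2 := by
      fin_cases i
      · exact Or.inl rfl
      · exact Or.inr rfl
    rcases hcases ω hω with h | h | h | h <;> subst h <;>
        rcases hi with hi | hi <;> rw [hi] <;> simp only [hC1, hC2] <;>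
        simp [h12, h13, h14, h23, h24, h34, h21, h31, h41, h32, h42, h43,
          key1, key2, key3, key4]
  refine ⟨main, ⟨?_, main⟩⟩
  have hda : d ≠ a := by
    intro h; rw [h] at habd; simp at habd
  by_cases ha : a = a * p / (p + m) + d * m / (p + m)
  · refine ⟨ω2, ?_, ?_⟩
    · simp [suppSet, hμ, h21, hm0]
    · rw [hX2, ← ha]; exact hda
  · exact ⟨ω1, by simp [suppSet, hμ, hp0], by rw [hX1]; exact ha⟩
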